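/- Pivot-counting lemma (the combinatorial core of the Finding Pivots lemma): assume the uniqueness assumption holds. Let d̂ be an estimate function, S a finite set of vertices, B ∈ ℝ≥0∞, and k ≥ 1 a natural number. Assume that for every vertex v with d̂(v) ≠ d(v) and d(v) < B there exists a complete vertex u ∈ S such that the shortest path to v visits u. Let Ũ := {v : d(v) < B and there exists u ∈ S such that the shortest path to v visits u}. Then there exists a function r : Ũ → S such that: (i) for each x ∈ Ũ, r(x) is complete and the shortest path to x visits r(x); (ii) letting P := {y ∈ S : the set {x ∈ Ũ : r(x) = y} has at least k elements}, we have k · |P| ≤ |Ũ|; (iii) for every x ∈ Ũ, either r(x) ∈ P, or the set {w ∈ V : the shortest path to w visits r(x) and the shortest path to x visits w} has at most k elements. -/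

import Mathlib

open scoped ENNReal

namespace SSSP

variable {V : Type*}

/-- The weight of a walk (a list of vertices): the sum of `w` over consecutive pairs.
A one-vertex walk has weight 0. -/
noncomputable def walkWeight (w : V → V → ℝ≥0∞) : List V → ℝ≥0∞
  | [] => 0
  | [_] => 0
  | a :: b :: p => w a b + walkWeight w (b :: p)

/-- `p` is a walk from `u` to `v`: a nonempty list beginning at `u` and ending at `v`. -/
def IsWalk (u v : V) (p : List V) : Prop :=
  p ≠ [] ∧ p.head? = some u ∧ p.getLast? = some v

/-- The distance from `u` to `v`: the infimum of the weights of all walks from `u` to `v`. -/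
noncomputable def dist (w : V → V → ℝ≥0∞) (u v : V) : ℝ≥0∞ :=
  ⨅ p : {p : List V // IsWalk u v p}, walkWeight w p.1

/-- The shortest path (from `s`) to `v` visits `u`. -/
def Visits (w : V → V → ℝ≥0∞) (s u v : V) : Prop :=
  dist w s u + dist w u v = dist w s v

/-- The uniqueness assumption: any two distinct walks starting from `s` with finite
weight have different weights. -/
def UniqueWeights (w : V → V → ℝ≥0∞) (s : V) : Prop :=
  ∀ p q : List V, p ≠ [] → q ≠ [] → p.head? = some s → q.head? = some s →
    walkWeight w p ≠ ⊤ → walkWeight w q ≠ ⊤ → walkWeight w p = walkWeight w q → p = q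

/-- The relaxation operator. -/
noncomputable def relax (w : V → V → ℝ≥0∞) (f : V → ℝ≥0∞) : V → ℝ≥0∞ :=
  fun v => min (f v) (⨅ u, f u + w u v)

lemma walkWeight_append (w : V → V → ℝ≥0∞) (xs : List V) (v : V) (ys : List V) :
    walkWeight w (xs ++ v :: ys) = walkWeight w (xs ++ [v]) + walkWeight w (v :: ys) := by
  induction xs with
  | nil =>
    cases ys <;> simp [walkWeight]
  | cons a xs ih =>
    cases xs with
    | nil => cases ys <;> simp [walkWeight, add_assoc]
    | cons b xs' =>
      simp only [List.cons_append, List.append_eq, walkWeight] at *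
      rw [ih, add_assoc]

lemma dist_le_walkWeight (w : V → V → ℝ≥0∞) {u v : V} {p : List V} (h : IsWalk u v p) :
    dist w u v ≤ walkWeight w p :=
  iInf_le (fun p : {p : List V // IsWalk u v p} => walkWeight w p.1) ⟨p, h⟩

lemma isWalk_append (w : V → V → ℝ≥0∞) {a b c : V} {p q : List V}
    (hp : IsWalk a b p) (hq : IsWalk b c q) :
    IsWalk a c (p ++ q.tail) ∧ walkWeight w (p ++ q.tail) = walkWeight w p + walkWeight w q := by
  obtain ⟨hpne, hph, hpl⟩ := hp
  obtain ⟨hqne, hqh, hql⟩ := hq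
  have hq' : q = b :: q.tail := by
    cases q with
    | nil => exact absurd rfl hqne
    | cons x t => simp at hqh; rw [hqh]; rfl
  have hp' : p = p.dropLast ++ [b] := by
    conv_lhs => rw [← List.dropLast_append_getLast? b hpl]
  constructor
  · refine ⟨by simp [hpne], ?_, ?_⟩
    · rw [List.head?_append_of_ne_nil _ hpne]; exact hph
    · cases htq : q.tail with
      | nil =>
        have : c = b := by rw [hq', htq] at hql; simpa using hql.symm
        simp [this, hpl]
      | cons y t =>
        have h1 : (y :: t).getLast? = some c := by
          rw [hq', htq] at hql
          rwa [List.getLast?_cons_cons] at hql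
        rw [List.getLast?_append, h1]
        rfl
  · conv_lhs => rw [hp', List.append_assoc, List.singleton_append, walkWeight_append]
    rw [← hp', ← hq']


lemma dist_triangle (w : V → V → ℝ≥0∞) (a b c : V) :
    dist w a c ≤ dist w a b + dist w b c := by
  have h : dist w a b + dist w b c =
      ⨅ p : {p : List V // IsWalk a b p}, ⨅ q : {q : List V // IsWalk b c q},
        (walkWeight w p.1 + walkWeight w q.1) := by
    rw [dist, dist, ENNReal.iInf_add]
    exact iInf_congr fun p => ENNReal.add_iInf
  rw [h]
  refine le_iInf fun p => le_iInf fun q => ?_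
  obtain ⟨hw, heq⟩ := isWalk_append w p.2 q.2
  exact heq ▸ dist_le_walkWeight w hw

lemma exists_dup_decomp {l : List V} (h : ¬ l.Nodup) :
    ∃ (x : V) (a b c : List V), l = a ++ x :: (b ++ x :: c) := by
  induction l with
  | nil => exact absurd List.nodup_nil h
  | cons y t ih =>
    rw [List.nodup_cons] at h
    push_neg at h
    by_cases hy : y ∈ t
    · obtain ⟨b, c, rfl⟩ := List.append_of_mem hy
      exact ⟨y, [], b, c, rfl⟩
    · obtain ⟨x, a, b, c, rfl⟩ := ih (h hy)
      exact ⟨x, y :: a, b, c, rfl⟩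

lemma exists_nodup_walk_le (w : V → V → ℝ≥0∞) {u v : V} :
    ∀ (p : List V), IsWalk u v p →
      ∃ q, IsWalk u v q ∧ q.Nodup ∧ walkWeight w q ≤ walkWeight w p := by
  suffices H : ∀ (n : ℕ) (p : List V), p.length ≤ n → IsWalk u v p →
      ∃ q, IsWalk u v q ∧ q.Nodup ∧ walkWeight w q ≤ walkWeight w p by
    exact fun p hp => H p.length p le_rfl hp
  intro n
  induction n with
  | zero =>
    intro p hl hw
    exact absurd (List.length_eq_zero_iff.mp (Nat.le_zero.mp hl)) hw.1
  | succ n ih =>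
    intro p hl hw
    by_cases hnd : p.Nodup
    · exact ⟨p, hw, hnd, le_rfl⟩
    obtain ⟨x, a, b, c, rfl⟩ := exists_dup_decomp hnd
    obtain ⟨z, hz⟩ := Option.isSome_iff_exists.mp
      (List.getLast?_isSome.mpr (List.cons_ne_nil x c))
    have hlast : (x :: (b ++ x :: c)).getLast? = (x :: c).getLast? := by
      have : x :: (b ++ x :: c) = (x :: b) ++ (x :: c) := by simp
      rw [this, List.getLast?_append, hz]
      rfl
    have hw' : IsWalk u v (a ++ x :: c) := by
      obtain ⟨-, hh, hlst⟩ := hw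
      refine ⟨by simp, ?_, ?_⟩
      · cases a with
        | nil => simpa using hh
        | cons y t =>
          rw [List.head?_append_of_ne_nil _ (List.cons_ne_nil y t)] at hh ⊢
          exact hh
      · rw [List.getLast?_append] at hlst ⊢
        rw [hlast] at hlst
        exact hlst
    have hwt : walkWeight w (a ++ x :: c) ≤ walkWeight w (a ++ x :: (b ++ x :: c)) := by
      rw [walkWeight_append w a x c, walkWeight_append w a x (b ++ x :: c)]
      refine add_le_add_right ?_ _
      have h2 : x :: (b ++ x :: c) = (x :: b) ++ x :: c := by simp
      rw [h2, walkWeight_append w (x :: b) x c]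
      exact le_add_self
    have hlen : (a ++ x :: c).length ≤ n := by
      have := hl
      simp only [List.length_append, List.length_cons] at this ⊢
      omega
    obtain ⟨q, h1, h2, h3⟩ := ih _ hlen hw'
    exact ⟨q, h1, h2, le_trans h3 hwt⟩

lemma exists_walk_eq_dist [Fintype V] (w : V → V → ℝ≥0∞) {u v : V} (h : dist w u v ≠ ⊤) :
    ∃ p, IsWalk u v p ∧ walkWeight w p = dist w u v := by
  have hne : Nonempty {p : List V // IsWalk u v p} := by
    by_contra hemp
    rw [not_nonempty_iff] at hemp
    rw [dist, iInf_of_empty] at h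
    exact h rfl
  obtain ⟨p0⟩ := hne
  set T : Set (List V) := {p | IsWalk u v p ∧ p.Nodup} with hT
  have hTfin : T.Finite := by
    refine (List.finite_length_le V (Fintype.card V)).subset ?_
    intro l hl
    exact hl.2.length_le_card
  have hTne : T.Nonempty := by
    obtain ⟨q, hq1, hq2, -⟩ := exists_nodup_walk_le w p0.1 p0.2
    exact ⟨q, hq1, hq2⟩
  obtain ⟨m, hmT, hmin⟩ := Set.exists_min_image T (walkWeight w) hTfin hTne
  refine ⟨m, hmT.1, le_antisymm ?_ (dist_le_walkWeight w hmT.1)⟩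
  rw [dist]
  refine le_iInf fun p => ?_
  obtain ⟨q, hq1, hq2, hq3⟩ := exists_nodup_walk_le w p.1 p.2
  exact le_trans (hmin q ⟨hq1, hq2⟩) hq3

/-- Under the uniqueness assumption, two vertices at the same finite distance from `s`
are equal. -/
lemma eq_of_dist_eq [Fintype V] {w : V → V → ℝ≥0∞} {s u u' : V} (huniq : UniqueWeights w s)
    (hu : dist w s u ≠ ⊤) (hu' : dist w s u' ≠ ⊤) (h : dist w s u = dist w s u') : u = u' := by
  obtain ⟨p, hp, hpw⟩ := exists_walk_eq_dist w hu
  obtain ⟨q, hq, hqw⟩ := exists_walk_eq_dist w hu'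
  have : p = q := huniq p q hp.1 hq.1 hp.2.1 hq.2.1 (hpw ▸ hu) (hqw ▸ hu')
    (by rw [hpw, hqw, h])
  have h2 : p.getLast? = q.getLast? := by rw [this]
  rw [hp.2.2, hq.2.2] at h2
  exact Option.some_injective _ h2

lemma Visits.dist_le {w : V → V → ℝ≥0∞} {s u v : V} (h : Visits w s u v) :
    dist w s u ≤ dist w s v := h ▸ le_self_add

lemma Visits.trans {w : V → V → ℝ≥0∞} {s u z x : V} (h1 : Visits w s u z)
    (h2 : Visits w s z x) : Visits w s u x := by
  refine le_antisymm ?_ (h2 ▸ dist_triangle w s u x)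
  calc dist w s u + dist w u x
        ≤ dist w s u + (dist w u z + dist w z x) :=
          add_le_add_right (dist_triangle w u z x) _
      _ = (dist w s u + dist w u z) + dist w z x := (add_assoc _ _ _).symm
      _ = dist w s z + dist w z x := by rw [h1]
      _ = dist w s x := h2




end SSSP

namespace SSSP

/-- Pivot-counting lemma: the combinatorial core of the Finding Pivots lemma. -/
theorem pivot_counting {V : Type*} [Fintype V] (w : V → V → ℝ≥0∞) (s : V)
    (huniq : UniqueWeights w s)
    (dhat : V → ℝ≥0∞) (hest : ∀ v, dist w s v ≤ dhat v)
    (S : Set V) (B : ℝ≥0∞) (k : ℕ) (hk : 1 ≤ k)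
    (hS : ∀ v, dhat v ≠ dist w s v → dist w s v < B →
      ∃ u ∈ S, dhat u = dist w s u ∧ Visits w s u v) :
    ∃ r : V → V,
      (∀ x ∈ {v | dist w s v < B ∧ ∃ u ∈ S, Visits w s u v}, r x ∈ S) ∧
      (∀ x ∈ {v | dist w s v < B ∧ ∃ u ∈ S, Visits w s u v},
        dhat (r x) = dist w s (r x) ∧ Visits w s (r x) x) ∧
      k * ({y ∈ S | k ≤ ({x ∈ {v | dist w s v < B ∧ ∃ u ∈ S, Visits w s u v} |
              r x = y}).ncard}).ncard
        ≤ ({v | dist w s v < B ∧ ∃ u ∈ S, Visits w s u v}).ncard ∧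
      (∀ x ∈ {v | dist w s v < B ∧ ∃ u ∈ S, Visits w s u v},
        r x ∈ {y ∈ S | k ≤ ({x ∈ {v | dist w s v < B ∧ ∃ u ∈ S, Visits w s u v} |
              r x = y}).ncard} ∨
        ({z : V | Visits w s (r x) z ∧ Visits w s z x}).ncard ≤ k) := by
  classical
  set U : Set V := {v | dist w s v < B ∧ ∃ u ∈ S, Visits w s u v} with hU
  set Good : V → Set V := fun x => {u | u ∈ S ∧ dhat u = dist w s u ∧ Visits w s u x}
    with hGood
  have hGoodne : ∀ x, x ∈ U → ∃ u, u ∈ Good x ∧ ∀ u' ∈ Good x,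
      dist w s u' ≤ dist w s u := by
    intro x hx
    obtain ⟨hxB, u0, hu0S, hu0v⟩ := hx
    have hne : (Good x).Nonempty := by
      by_cases h : dhat u0 = dist w s u0
      · exact ⟨u0, hu0S, h, hu0v⟩
      · obtain ⟨u, huS, hc, hv⟩ := hS u0 h (lt_of_le_of_lt hu0v.dist_le hxB)
        exact ⟨u, huS, hc, hv.trans hu0v⟩
    obtain ⟨u, hu, hmax⟩ := Set.exists_max_image (Good x) (dist w s) (Set.toFinite _) hne
    exact ⟨u, hu, hmax⟩
  set r : V → V := fun x => if h : x ∈ U then (hGoodne x h).choose else x with hr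
  have hrGood : ∀ x, ∀ hx : x ∈ U, r x ∈ Good x ∧ ∀ u' ∈ Good x,
      dist w s u' ≤ dist w s (r x) := by
    intro x hx
    have : r x = (hGoodne x hx).choose := by rw [hr]; exact dif_pos hx
    rw [this]
    exact (hGoodne x hx).choose_spec
  have hseg : ∀ x, x ∈ U → ∀ z, Visits w s (r x) z → Visits w s z x →
      z ∈ U ∧ r z = r x := by
    intro x hx z h1 h2
    have hxB : dist w s x < B := hx.1
    have hxfin : dist w s x ≠ ⊤ := (lt_of_lt_of_le hxB le_top).ne
    have hzU : z ∈ U := ⟨lt_of_le_of_lt h2.dist_le hxB, r x, (hrGood x hx).1.1, h1⟩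
    refine ⟨hzU, ?_⟩
    have hrz := hrGood z hzU
    have hrx := hrGood x hx
    have hrzx : r z ∈ Good x := ⟨hrz.1.1, hrz.1.2.1, hrz.1.2.2.trans h2⟩
    have hle1 : dist w s (r z) ≤ dist w s (r x) := hrx.2 _ hrzx
    have hrxz : r x ∈ Good z := ⟨hrx.1.1, hrx.1.2.1, h1⟩
    have hle2 : dist w s (r x) ≤ dist w s (r z) := hrz.2 _ hrxz
    have hzf : dist w s z ≠ ⊤ := (lt_of_lt_of_le (h2.dist_le.trans_lt hxB) le_top).ne
    have h1f : dist w s (r z) ≠ ⊤ := fun ht =>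
      hzf (top_le_iff.mp (ht ▸ hrz.1.2.2.dist_le))
    have h2f : dist w s (r x) ≠ ⊤ := fun ht =>
      hzf (top_le_iff.mp (ht ▸ (hrxz.2.2 : Visits w s (r x) z).dist_le))
    exact eq_of_dist_eq huniq h1f h2f (le_antisymm hle1 hle2)
  refine ⟨r, fun x hx => (hrGood x hx).1.1, fun x hx => (hrGood x hx).1.2, ?_, ?_⟩
  · -- counting
    have hUfin : U.Finite := Set.toFinite _
    set P : Set V := {y ∈ S | k ≤ ({x ∈ U | r x = y}).ncard} with hP
    have hPfin : P.Finite := Set.toFinite _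
    set PF : Finset V := hPfin.toFinset with hPF
    set fib : V → Finset V := fun y => (Set.toFinite {x ∈ U | r x = y}).toFinset with hfib
    have hdisj : ∀ y ∈ PF, ∀ y' ∈ PF, y ≠ y' → Disjoint (fib y) (fib y') := by
      intro y _ y' _ hne
      rw [Finset.disjoint_left]
      intro a ha ha'
      rw [hfib, Set.Finite.mem_toFinset] at ha ha'
      exact hne (ha.2 ▸ ha'.2 ▸ rfl)
    have hsub : PF.biUnion fib ⊆ hUfin.toFinset := by
      intro a ha
      rw [Finset.mem_biUnion] at ha
      obtain ⟨y, -, hay⟩ := ha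
      rw [hfib, Set.Finite.mem_toFinset] at hay
      rw [Set.Finite.mem_toFinset]
      exact hay.1
    calc k * P.ncard = ∑ _y ∈ PF, k := by
          rw [Finset.sum_const, smul_eq_mul, Set.ncard_eq_toFinset_card P hPfin, mul_comm]
      _ ≤ ∑ y ∈ PF, (fib y).card := by
          refine Finset.sum_le_sum fun y hy => ?_
          rw [hPF, Set.Finite.mem_toFinset] at hy
          rw [hfib, ← Set.ncard_eq_toFinset_card _ (Set.toFinite _)]
          exact hy.2
      _ = (PF.biUnion fib).card := (Finset.card_biUnion hdisj).symm
      _ ≤ hUfin.toFinset.card := Finset.card_le_card hsub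
      _ = U.ncard := (Set.ncard_eq_toFinset_card U hUfin).symm
  · intro x hx
    by_cases hp : k ≤ ({x' ∈ U | r x' = r x}).ncard
    · exact Or.inl ⟨(hrGood x hx).1.1, hp⟩
    · refine Or.inr ?_
      have hsub : {z | Visits w s (r x) z ∧ Visits w s z x} ⊆ {x' ∈ U | r x' = r x} :=
        fun z hz => (hseg x hx z hz.1 hz.2)
      exact le_trans (Set.ncard_le_ncard hsub (Set.toFinite _)) (Nat.lt_of_not_le hp).le


end SSSP
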